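/- The linear map λ ↦ (Q_kλ, R_kΔλ) from ℝ^T to ℝ^{T'} × Δ(ker Q_k) is a bijection. In particular: Δ restricts to a bijection from ker Q_k onto Δ(ker Q_k); dim ℝ^{T'} + dim Δ(ker Q_k) = dim ℝ^T; and if Q_kλ = 0 and R_kΔλ = 0 then λ = 0. -/

import Mathlib

open Finset

noncomputable section

/-- Points of the discrete torus `(ℤ/Nℤ)³`. -/
abbrev TPt (N : ℕ) : Type := Fin 3 → ZMod N

/-- The standard unit vector `e_μ` in the torus. -/
def unitVec (N : ℕ) (μ : Fin 3) : TPt N := fun i => if i = μ then 1 else 0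

/-- The representative of `a ∈ ℤ/Nℤ` in the symmetric range `{-(N-1)/2, …, (N-1)/2}`
(for odd `N`). -/
def symRep (N : ℕ) (a : ZMod N) : ℤ :=
  if 2 * (a.val : ℤ) + 1 ≤ (N : ℤ) then (a.val : ℤ) else (a.val : ℤ) - (N : ℤ)

/-- Shift a torus point by `k` steps in direction `μ`. -/
def shiftT {N : ℕ} (z : TPt N) (μ : Fin 3) (k : ℤ) : TPt N :=
  fun i => if i = μ then z i + (k : ZMod N) else z i

/-- The sum of the gauge field `A` along the straight lattice path from `z` to `z + t·e_μ`. -/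
def segT {N : ℕ} (A : TPt N → TPt N → ℝ) (z : TPt N) (μ : Fin 3) (t : ℤ) : ℝ :=
  if 0 ≤ t then ∑ j ∈ Finset.range t.toNat, A (shiftT z μ (j : ℤ)) (shiftT z μ ((j : ℤ) + 1))
  else ∑ j ∈ Finset.range (-t).toNat, A (shiftT z μ (-(j : ℤ))) (shiftT z μ (-(j : ℤ) - 1))

/-- The field strength `dA` on the plaquette based at `x` spanned by `e_μ, e_ν`. -/
def plaqT {N : ℕ} (A : TPt N → TPt N → ℝ) (x : TPt N) (μ ν : Fin 3) : ℝ :=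
  A x (x + unitVec N μ) + A (x + unitVec N μ) (x + unitVec N μ + unitVec N ν)
    + A (x + unitVec N μ + unitVec N ν) (x + unitVec N ν) + A (x + unitVec N ν) x

/-- The corner of the rectilinear path `Γ^π_{yx}` reached after the first `m` coordinate
moves. -/
def interPtT {N : ℕ} (y x : TPt N) (π : Equiv.Perm (Fin 3)) (m : ℕ) : TPt N :=
  fun i => if ((π.symm i : Fin 3) : ℕ) < m then x i else y i

/-- `A(Γ^π_{yx})`: the sum of `A` along the rectilinear path (not wrapping around the
torus) from `y` to `x`, moving the coordinates to their final values in the order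
`π 0, π 1, π 2`; the coordinate increments are the symmetric representatives of `x - y`. -/
def gammaSumT {N : ℕ} (A : TPt N → TPt N → ℝ) (π : Equiv.Perm (Fin 3)) (y x : TPt N) : ℝ :=
  ∑ m : Fin 3, segT A (interPtT y x π (m : ℕ)) (π m) (symRep N (x (π m) - y (π m)))

/-- `(τA)(y,x) = (1/6) Σ_π A(Γ^π_{yx})`, averaged over the `3! = 6` permutations. -/
def tauBlk {N : ℕ} (A : TPt N → TPt N → ℝ) (y x : TPt N) : ℝ :=
  (1 / 6) * ∑ π : Equiv.Perm (Fin 3), gammaSumT A π y x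

/-- The block of radius `R` centered at `y`: all `x` whose coordinates relative to `y`
have symmetric representative of absolute value at most `R`. -/
def blockF (N : ℕ) [NeZero N] (R : ℤ) (y : TPt N) : Finset (TPt N) :=
  Finset.univ.filter fun x => ∀ i, |symRep N (x i - y i)| ≤ R

/-- Membership in the coarse lattice `(Lℤ/Nℤ)³ ⊆ (ℤ/Nℤ)³`. -/
def isCoarse (L N : ℕ) (y : TPt N) : Prop :=
  ∀ i, ∃ c : ZMod N, y i = (L : ZMod N) * c

/-- The coarse unit vector `L·e_μ`. -/
def cUnitVec (L N : ℕ) (μ : Fin 3) : TPt N := fun i => if i = μ then (L : ZMod N) else 0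

/-- The block-averaged field on coarse bonds:
`(QA)(y, y+Le_μ) = L⁻⁴ Σ_{x ∈ B(y)} A(Γ_{x,x+Le_μ})`. -/
def Qc (L : ℕ) {N : ℕ} [NeZero N] (A : TPt N → TPt N → ℝ) (y : TPt N) (μ : Fin 3) : ℝ :=
  ((L : ℝ) ^ 4)⁻¹ * ∑ x ∈ blockF N (((L : ℤ) - 1) / 2) y, segT A x μ (L : ℤ)

/-- The identification of `(ℤ/L^{M-k}ℤ)³` with the coarse lattice
`T' = (L^kℤ/L^Mℤ)³ ⊆ T = (ℤ/L^Mℤ)³`. -/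
def emb (L M k : ℕ) (y : TPt (L ^ (M - k))) : TPt (L ^ M) :=
  fun i => (L : ZMod (L ^ M)) ^ k * (((y i).val : ℕ) : ZMod (L ^ M))

/-- The block-average operator `Q_k : ℝ^T → ℝ^{T'}`,
`(Q_kλ)(y) = L^{-3k} Σ_{x ∈ B^k(y)} λ(x)`. -/
def QkL (L M k : ℕ) [NeZero (L ^ M)] [NeZero (L ^ (M - k))] :
    (TPt (L ^ M) → ℝ) →ₗ[ℝ] (TPt (L ^ (M - k)) → ℝ) where
  toFun lam := fun y =>
    ((L : ℝ) ^ (3 * k))⁻¹ * ∑ x ∈ blockF (L ^ M) (((L : ℤ) ^ k - 1) / 2) (emb L M k y), lam x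
  map_add' f g := by
    funext y
    simp only [Pi.add_apply]
    rw [Finset.sum_add_distrib]
    ring
  map_smul' c f := by
    funext y
    simp only [Pi.smul_apply, smul_eq_mul, RingHom.id_apply, ← Finset.mul_sum]
    ring

/-- The lattice Laplacian `(Δλ)(x) = Σ_{|e|=1} (λ(x+e) − λ(x))`, the sum running over the
six unit vectors `±e_μ`. -/
def lapL (N : ℕ) : (TPt N → ℝ) →ₗ[ℝ] (TPt N → ℝ) where
  toFun f := fun x =>
    (∑ μ : Fin 3, (f (x + unitVec N μ) - f x)) + ∑ μ : Fin 3, (f (x - unitVec N μ) - f x)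
  map_add' f g := by
    funext x
    simp only [Pi.add_apply]
    rw [show (∑ μ : Fin 3, (f (x + unitVec N μ) + g (x + unitVec N μ) - (f x + g x)))
        = (∑ μ : Fin 3, (f (x + unitVec N μ) - f x))
          + ∑ μ : Fin 3, (g (x + unitVec N μ) - g x) by
      rw [← Finset.sum_add_distrib]; exact Finset.sum_congr rfl fun μ _ => by ring]
    rw [show (∑ μ : Fin 3, (f (x - unitVec N μ) + g (x - unitVec N μ) - (f x + g x)))
        = (∑ μ : Fin 3, (f (x - unitVec N μ) - f x))
          + ∑ μ : Fin 3, (g (x - unitVec N μ) - g x) by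
      rw [← Finset.sum_add_distrib]; exact Finset.sum_congr rfl fun μ _ => by ring]
    ring
  map_smul' c f := by
    funext x
    simp only [Pi.smul_apply, smul_eq_mul, RingHom.id_apply]
    rw [show (∑ μ : Fin 3, (c * f (x + unitVec N μ) - c * f x))
        = c * ∑ μ : Fin 3, (f (x + unitVec N μ) - f x) by
      rw [Finset.mul_sum]; exact Finset.sum_congr rfl fun μ _ => by ring]
    rw [show (∑ μ : Fin 3, (c * f (x - unitVec N μ) - c * f x))
        = c * ∑ μ : Fin 3, (f (x - unitVec N μ) - f x) by
      rw [Finset.mul_sum]; exact Finset.sum_congr rfl fun μ _ => by ring]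
    ring

/-- The standard (Euclidean) inner product on `ℝ^ι`. -/
def dotF {ι : Type*} [Fintype ι] (f g : ι → ℝ) : ℝ := ∑ x : ι, f x * g x

/-- The subspace `Δ(ker Q_k) ⊆ ℝ^T`. -/
def Ssub (L M k : ℕ) [NeZero (L ^ M)] [NeZero (L ^ (M - k))] :
    Submodule ℝ (TPt (L ^ M) → ℝ) :=
  (LinearMap.ker (QkL L M k)).map (lapL (L ^ M))
section Aux

lemma natCast_val_self {N : ℕ} [NeZero N] (a : ZMod N) : ((a.val : ℕ) : ZMod N) = a :=
  ZMod.natCast_rightInverse a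

lemma symRep_zero (N : ℕ) [NeZero N] : symRep N 0 = 0 := by
  have h1 : (1:ℕ) ≤ N := Nat.one_le_iff_ne_zero.mpr (NeZero.ne N)
  unfold symRep
  rw [ZMod.val_zero]
  rw [if_pos (by push_cast; omega)]
  simp

lemma center_mem_blockF (N : ℕ) [NeZero N] (R : ℤ) (hR : 0 ≤ R) (y : TPt N) :
    y ∈ blockF N R y := by
  simp only [blockF, Finset.mem_filter, Finset.mem_univ, true_and]
  intro i
  rw [sub_self, symRep_zero]
  simpa using hR

lemma const_of_shift {N : ℕ} [NeZero N] (f : TPt N → ℝ)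
    (h : ∀ x μ, f (x + unitVec N μ) = f x) (x : TPt N) : f x = f 0 := by
  have key : ∀ (n : ℕ) (μ : Fin 3) (z : TPt N),
      f (z + fun i => if i = μ then (n : ZMod N) else 0) = f z := by
    intro n
    induction n with
    | zero =>
      intro μ z
      have : (z + fun i => if i = μ then ((0:ℕ) : ZMod N) else 0) = z := by
        funext i; by_cases hi : i = μ <;> simp [hi]
      rw [this]
    | succ n ih =>
      intro μ z
      have : (z + fun i => if i = μ then ((n+1 : ℕ) : ZMod N) else 0)
           = (z + fun i => if i = μ then ((n:ℕ) : ZMod N) else 0) + unitVec N μ := by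
        funext i
        by_cases hi : i = μ <;> simp [unitVec, hi, Pi.add_apply] <;> push_cast <;> ring
      rw [this, h, ih]
  have hx : x = (((0 : TPt N) + fun i => if i = (0:Fin 3) then (((x 0).val : ℕ) : ZMod N) else 0)
      + fun i => if i = (1:Fin 3) then (((x 1).val : ℕ) : ZMod N) else 0)
      + fun i => if i = (2:Fin 3) then (((x 2).val : ℕ) : ZMod N) else 0 := by
    funext i
    fin_cases i <;> simp [Pi.add_apply, natCast_val_self]
  conv_lhs => rw [hx]
  rw [key, key, key]

lemma dot_lap (N : ℕ) [NeZero N] (f : TPt N → ℝ) :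
    dotF f (lapL N f) = - ∑ μ : Fin 3, ∑ x : TPt N, (f (x + unitVec N μ) - f x)^2 := by
  have A : ∀ μ : Fin 3, ∑ x : TPt N, f (x + unitVec N μ) * f x
      = ∑ x : TPt N, f x * f (x - unitVec N μ) := by
    intro μ
    refine Fintype.sum_bijective (· + unitVec N μ) (Equiv.addRight (unitVec N μ)).bijective _ _ ?_
    intro x; simp
  have B : ∀ μ : Fin 3, ∑ x : TPt N, f (x + unitVec N μ) * f (x + unitVec N μ)
      = ∑ x : TPt N, f x * f x := by
    intro μ
    refine Fintype.sum_bijective (· + unitVec N μ) (Equiv.addRight (unitVec N μ)).bijective _ _ ?_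
    intro x; rfl
  unfold dotF
  simp only [lapL, LinearMap.coe_mk, AddHom.coe_mk]
  have expand : ∀ x : TPt N, f x * ((∑ μ : Fin 3, (f (x + unitVec N μ) - f x))
      + ∑ μ : Fin 3, (f (x - unitVec N μ) - f x))
      = ∑ μ : Fin 3, (f x * f (x + unitVec N μ) + f x * f (x - unitVec N μ) - 2 * (f x * f x)) := by
    intro x
    rw [mul_add, Finset.mul_sum, Finset.mul_sum, ← Finset.sum_add_distrib]
    exact Finset.sum_congr rfl fun μ _ => by ring
  calc ∑ x : TPt N, f x * ((∑ μ : Fin 3, (f (x + unitVec N μ) - f x))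
        + ∑ μ : Fin 3, (f (x - unitVec N μ) - f x))
      = ∑ x : TPt N, ∑ μ : Fin 3,
          (f x * f (x + unitVec N μ) + f x * f (x - unitVec N μ) - 2 * (f x * f x)) :=
        Finset.sum_congr rfl fun x _ => expand x
    _ = ∑ μ : Fin 3, ∑ x : TPt N,
          (f x * f (x + unitVec N μ) + f x * f (x - unitVec N μ) - 2 * (f x * f x)) :=
        Finset.sum_comm
    _ = ∑ μ : Fin 3, ((∑ x : TPt N, f x * f (x + unitVec N μ))
          + (∑ x : TPt N, f x * f (x - unitVec N μ)) - 2 * ∑ x : TPt N, f x * f x) := by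
        refine Finset.sum_congr rfl fun μ _ => ?_
        rw [Finset.sum_sub_distrib, Finset.sum_add_distrib, ← Finset.mul_sum]
    _ = - ∑ μ : Fin 3, ∑ x : TPt N, (f (x + unitVec N μ) - f x)^2 := by
        rw [← Finset.sum_neg_distrib]
        refine Finset.sum_congr rfl fun μ _ => ?_
        have expand2 : ∑ x : TPt N, (f (x + unitVec N μ) - f x)^2
            = (∑ x : TPt N, f (x + unitVec N μ) * f (x + unitVec N μ))
              + (∑ x : TPt N, f x * f x)
              - 2 * ∑ x : TPt N, f x * f (x + unitVec N μ) := by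
          have hpt : ∀ x : TPt N, (f (x + unitVec N μ) - f x)^2
              = f (x + unitVec N μ) * f (x + unitVec N μ) + f x * f x
                - 2 * (f x * f (x + unitVec N μ)) := fun x => by ring
          rw [Finset.sum_congr rfl fun x _ => hpt x, Finset.sum_sub_distrib,
            Finset.sum_add_distrib, ← Finset.mul_sum]
        rw [expand2, B μ, ← A μ]
        have hc : ∑ x : TPt N, f (x + unitVec N μ) * f x
            = ∑ x : TPt N, f x * f (x + unitVec N μ) :=
          Finset.sum_congr rfl fun x _ => mul_comm _ _
        rw [hc]; ring

lemma dotF_self_zero {ι : Type*} [Fintype ι] (f : ι → ℝ) (h : dotF f f = 0) : f = 0 := by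
  funext x
  have h2 := (Finset.sum_eq_zero_iff_of_nonneg
    (fun i (_ : i ∈ Finset.univ) => mul_self_nonneg (f i))).mp h x (Finset.mem_univ x)
  exact mul_self_eq_zero.mp h2

lemma lap_ker_const {N : ℕ} [NeZero N] (f : TPt N → ℝ) (h : lapL N f = 0) :
    ∀ x, f x = f 0 := by
  have h0 : dotF f (lapL N f) = 0 := by rw [h]; simp [dotF]
  rw [dot_lap] at h0
  have h1 : ∀ μ ∈ (Finset.univ : Finset (Fin 3)),
      ∑ x : TPt N, (f (x + unitVec N μ) - f x)^2 = 0 := by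
    refine (Finset.sum_eq_zero_iff_of_nonneg fun μ _ =>
      Finset.sum_nonneg fun x _ => sq_nonneg _).mp ?_
    linarith
  have h2 : ∀ x μ, f (x + unitVec N μ) = f x := by
    intro x μ
    have h3 := (Finset.sum_eq_zero_iff_of_nonneg fun x (_ : x ∈ Finset.univ) =>
      sq_nonneg (f (x + unitVec N μ) - f x)).mp (h1 μ (Finset.mem_univ μ)) x (Finset.mem_univ x)
    have h4 := pow_eq_zero_iff (n := 2) (by norm_num) |>.mp h3
    linarith [sub_eq_zero.mp h4]
  exact const_of_shift f h2

end Aux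
section Aux2

variable (L M k : ℕ)

lemma val_emb (hL : 1 ≤ L) (hkM : k ≤ M) [NeZero (L ^ M)] [NeZero (L ^ (M - k))]
    (a : ZMod (L ^ (M - k))) :
    ((L : ZMod (L ^ M)) ^ k * ((a.val : ℕ) : ZMod (L ^ M))).val = L ^ k * a.val := by
  have hlt : L ^ k * a.val < L ^ M := by
    calc L ^ k * a.val < L ^ k * L ^ (M - k) :=
          (Nat.mul_lt_mul_left (pow_pos hL k)).mpr (ZMod.val_lt a)
      _ = L ^ M := by rw [← pow_add]; congr 1; omega
  rw [show (L : ZMod (L ^ M)) ^ k * ((a.val : ℕ) : ZMod (L ^ M))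
      = ((L ^ k * a.val : ℕ) : ZMod (L ^ M)) by push_cast; ring]
  exact ZMod.val_cast_of_lt hlt

lemma emb_coord_inj (hL : 1 ≤ L) (hkM : k ≤ M) [NeZero (L ^ M)] [NeZero (L ^ (M - k))]
    (a b : ZMod (L ^ (M - k)))
    (hab : (L : ZMod (L ^ M)) ^ k * ((a.val : ℕ) : ZMod (L ^ M))
         = (L : ZMod (L ^ M)) ^ k * ((b.val : ℕ) : ZMod (L ^ M))) : a = b := by
  have h1 := congrArg ZMod.val hab
  rw [val_emb L M k hL hkM a, val_emb L M k hL hkM b] at h1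
  have h2 : a.val = b.val := Nat.eq_of_mul_eq_mul_left (pow_pos hL k) h1
  exact ZMod.val_injective _ h2

lemma emb_mem_block_iff (hL3 : 3 ≤ L) (hk : 1 ≤ k) (hkM : k ≤ M)
    [NeZero (L ^ M)] [NeZero (L ^ (M - k))] (y y' : TPt (L ^ (M - k))) :
    emb L M k y ∈ blockF (L ^ M) (((L : ℤ) ^ k - 1) / 2) (emb L M k y') ↔ y = y' := by
  have hL1 : 1 ≤ L := by omega
  have hpow1 : (1 : ℤ) ≤ (L : ℤ) ^ k := one_le_pow₀ (by exact_mod_cast hL1)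
  have hRnn : 0 ≤ ((L : ℤ) ^ k - 1) / 2 := Int.ediv_nonneg (by omega) (by norm_num)
  constructor
  · intro h
    simp only [blockF, Finset.mem_filter, Finset.mem_univ, true_and] at h
    funext i
    refine emb_coord_inj L M k hL1 hkM _ _ ?_
    have hi := h i
    set z := emb L M k y i - emb L M k y' i with hzdef
    have hz : z = (L : ZMod (L ^ M)) ^ k
        * (((((y i).val : ℕ)) : ZMod (L ^ M)) - ((((y' i).val : ℕ)) : ZMod (L ^ M))) := by
      rw [hzdef]; unfold emb; ring
    have hdvdval : L ^ k ∣ z.val := by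
      have hdvd' : L ^ k ∣ L ^ M := pow_dvd_pow L hkM
      have hmap := congrArg (ZMod.castHom hdvd' (ZMod (L ^ k))) hz
      rw [ZMod.castHom_apply, ← ZMod.natCast_val] at hmap
      rw [map_mul, map_pow, map_natCast] at hmap
      rw [show ((L : ZMod (L ^ k)) ^ k) = ((L ^ k : ℕ) : ZMod (L ^ k)) by push_cast; ring,
        ZMod.natCast_self, zero_mul] at hmap
      exact (ZMod.natCast_eq_zero_iff _ _).mp hmap
    have hdvdZ : (L : ℤ) ^ k ∣ symRep (L ^ M) z := by
      have hc : (L : ℤ) ^ k ∣ ((z.val : ℕ) : ℤ) := by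
        exact_mod_cast Int.natCast_dvd_natCast.mpr hdvdval
      unfold symRep
      split
      · exact hc
      · refine dvd_sub hc ?_
        exact_mod_cast Int.natCast_dvd_natCast.mpr (pow_dvd_pow L hkM)
    have habs : |symRep (L ^ M) z| < (L : ℤ) ^ k := by
      refine lt_of_le_of_lt hi ?_
      have h2 : ((L : ℤ) ^ k - 1) / 2 ≤ (L : ℤ) ^ k - 1 := Int.ediv_le_self _ (by omega)
      omega
    have h0 : symRep (L ^ M) z = 0 := Int.eq_zero_of_abs_lt_dvd hdvdZ habs
    have hz0 : z = 0 := by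
      have hvlt : z.val < L ^ M := ZMod.val_lt z
      unfold symRep at h0
      split at h0
      · exact (ZMod.val_eq_zero z).mp (by exact_mod_cast h0)
      · exfalso
        have : (z.val : ℤ) = (L ^ M : ℕ) := by push_cast at h0 ⊢; omega
        have : z.val = L ^ M := by exact_mod_cast this
        omega
    have := sub_eq_zero.mp (hzdef ▸ hz0)
    unfold emb at this
    exact this
  · rintro rfl
    exact center_mem_blockF _ _ hRnn _

lemma Qk_apply [NeZero (L ^ M)] [NeZero (L ^ (M - k))] (f : TPt (L ^ M) → ℝ)
    (y : TPt (L ^ (M - k))) :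
    QkL L M k f y = ((L : ℝ) ^ (3 * k))⁻¹
      * ∑ x ∈ blockF (L ^ M) (((L : ℤ) ^ k - 1) / 2) (emb L M k y), f x := rfl

lemma Qk_surj (hL3 : 3 ≤ L) (hk : 1 ≤ k) (hkM : k ≤ M)
    [NeZero (L ^ M)] [NeZero (L ^ (M - k))] :
    Function.Surjective (QkL L M k) := by
  intro w
  have hLne : ((L : ℝ) ^ (3 * k)) ≠ 0 := pow_ne_zero _ (by positivity)
  refine ⟨fun x => ∑ y : TPt (L ^ (M - k)),
    if x = emb L M k y then (L : ℝ) ^ (3 * k) * w y else 0, ?_⟩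
  funext y'
  rw [Qk_apply]
  rw [Finset.sum_comm]
  have step : ∀ y : TPt (L ^ (M - k)),
      (∑ x ∈ blockF (L ^ M) (((L : ℤ) ^ k - 1) / 2) (emb L M k y'),
        if x = emb L M k y then (L : ℝ) ^ (3 * k) * w y else 0)
      = if y = y' then (L : ℝ) ^ (3 * k) * w y else 0 := by
    intro y
    rw [Finset.sum_ite_eq' (blockF (L ^ M) (((L : ℤ) ^ k - 1) / 2) (emb L M k y'))
      (emb L M k y) (fun _ => (L : ℝ) ^ (3 * k) * w y)]
    exact if_congr (emb_mem_block_iff L M k hL3 hk hkM y y') rfl rfl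
  rw [Finset.sum_congr rfl fun y _ => step y, Finset.sum_ite_eq' Finset.univ y'
    (fun y => (L : ℝ) ^ (3 * k) * w y)]
  simp [inv_mul_cancel_left₀ hLne]

lemma ker_inter (hL3 : 3 ≤ L) (hk : 1 ≤ k) (hkM : k ≤ M)
    [NeZero (L ^ M)] [NeZero (L ^ (M - k))] (f : TPt (L ^ M) → ℝ)
    (hQ : QkL L M k f = 0) (hlap : lapL (L ^ M) f = 0) : f = 0 := by
  have hc := lap_ker_const f hlap
  have hpow1 : (1 : ℤ) ≤ (L : ℤ) ^ k := one_le_pow₀ (by exact_mod_cast (by omega : 1 ≤ L))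
  have hRnn : 0 ≤ ((L : ℤ) ^ k - 1) / 2 := Int.ediv_nonneg (by omega) (by norm_num)
  have h0 : f 0 = 0 := by
    have hy := congrFun hQ (0 : TPt (L ^ (M - k)))
    rw [Qk_apply] at hy
    have hsum : ∑ x ∈ blockF (L ^ M) (((L : ℤ) ^ k - 1) / 2) (emb L M k 0), f x
        = (blockF (L ^ M) (((L : ℤ) ^ k - 1) / 2) (emb L M k 0)).card * f 0 := by
      rw [Finset.sum_congr rfl fun x _ => hc x, Finset.sum_const, nsmul_eq_mul]
    rw [hsum, Pi.zero_apply] at hy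
    have hcard : 0 < (blockF (L ^ M) (((L : ℤ) ^ k - 1) / 2) (emb L M k 0)).card :=
      Finset.card_pos.mpr ⟨emb L M k 0, center_mem_blockF _ _ hRnn _⟩
    have hLne : ((L : ℝ) ^ (3 * k)) ≠ 0 := pow_ne_zero _ (by positivity)
    have hcne : ((blockF (L ^ M) (((L : ℤ) ^ k - 1) / 2) (emb L M k 0)).card : ℝ) ≠ 0 := by
      exact_mod_cast hcard.ne'
    have hy2 : ((blockF (L ^ M) (((L : ℤ) ^ k - 1) / 2) (emb L M k 0)).card : ℝ) * f 0 = 0 := by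
      have := congrArg (fun t => (L : ℝ) ^ (3 * k) * t) hy
      simpa [mul_assoc, mul_inv_cancel_left₀ hLne] using this.symm
    rcases mul_eq_zero.mp hy2 with h | h
    · exact absurd h hcne
    · exact h
  funext x
  rw [hc x, h0, Pi.zero_apply]

end Aux2

theorem gauge_fixing_bijection (L M k : ℕ) (hL3 : 3 ≤ L) (hLodd : Odd L)
    (hk : 1 ≤ k) (hkM : k ≤ M) [NeZero (L ^ M)] [NeZero (L ^ (M - k))]
    (R : (TPt (L ^ M) → ℝ) →ₗ[ℝ] (TPt (L ^ M) → ℝ))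
    (hRmem : ∀ v, R v ∈ Ssub L M k)
    (hRorth : ∀ v, ∀ w ∈ Ssub L M k, dotF (v - R v) w = 0) :
    Function.Injective
      (fun lam : TPt (L ^ M) → ℝ => (QkL L M k lam, R (lapL (L ^ M) lam))) ∧
    (∀ (w : TPt (L ^ (M - k)) → ℝ) (s : TPt (L ^ M) → ℝ), s ∈ Ssub L M k →
      ∃ lam : TPt (L ^ M) → ℝ, QkL L M k lam = w ∧ R (lapL (L ^ M) lam) = s) ∧
    Set.BijOn (fun lam => lapL (L ^ M) lam)
      ((LinearMap.ker (QkL L M k) : Submodule ℝ (TPt (L ^ M) → ℝ)) : Set (TPt (L ^ M) → ℝ))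
      ((Ssub L M k : Submodule ℝ (TPt (L ^ M) → ℝ)) : Set (TPt (L ^ M) → ℝ)) ∧
    Module.finrank ℝ (TPt (L ^ (M - k)) → ℝ) + Module.finrank ℝ (Ssub L M k)
      = Module.finrank ℝ (TPt (L ^ M) → ℝ) ∧
    (∀ lam : TPt (L ^ M) → ℝ, QkL L M k lam = 0 → R (lapL (L ^ M) lam) = 0 → lam = 0) := by
  classical
  have Rid : ∀ w ∈ Ssub L M k, R w = w := by
    intro w hw
    have h1 : w - R w ∈ Ssub L M k := Submodule.sub_mem _ hw (hRmem w)
    have h2 := hRorth w (w - R w) h1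
    have h3 := dotF_self_zero _ h2
    exact (sub_eq_zero.mp h3).symm
  have hzero : ∀ lam : TPt (L ^ M) → ℝ,
      QkL L M k lam = 0 → R (lapL (L ^ M) lam) = 0 → lam = 0 := by
    intro lam hQ hR0
    have hmem : lapL (L ^ M) lam ∈ Ssub L M k :=
      Submodule.mem_map_of_mem (LinearMap.mem_ker.mpr hQ)
    have hlap0 : lapL (L ^ M) lam = 0 := by rw [← Rid _ hmem, hR0]
    exact ker_inter L M k hL3 hk hkM lam hQ hlap0
  refine ⟨?_, ?_, ⟨?_, ?_, ?_⟩, ?_, hzero⟩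
  · -- injectivity
    intro a b hab
    have h1 : QkL L M k a = QkL L M k b := congrArg Prod.fst hab
    have h2 : R (lapL (L ^ M) a) = R (lapL (L ^ M) b) := congrArg Prod.snd hab
    have hQ : QkL L M k (a - b) = 0 := by rw [map_sub, h1, sub_self]
    have hR0 : R (lapL (L ^ M) (a - b)) = 0 := by rw [map_sub, map_sub, h2, sub_self]
    exact sub_eq_zero.mp (hzero _ hQ hR0)
  · -- surjectivity onto pairs
    intro w s hs
    obtain ⟨lam0, hlam0⟩ := Qk_surj L M k hL3 hk hkM w
    obtain ⟨mu, hmu, hmueq⟩ := Submodule.mem_map.mp hs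
    obtain ⟨mu0, hmu0, hmu0eq⟩ := Submodule.mem_map.mp (hRmem (lapL (L ^ M) lam0))
    refine ⟨lam0 + mu - mu0, ?_, ?_⟩
    · rw [map_sub, map_add, hlam0, LinearMap.mem_ker.mp hmu, LinearMap.mem_ker.mp hmu0]
      simp
    · rw [map_sub, map_add, map_sub, map_add, hmueq, hmu0eq]
      rw [Rid s hs, Rid _ (hRmem (lapL (L ^ M) lam0))]
      ring_nf
  · -- MapsTo
    intro lam hlam
    exact Submodule.mem_map_of_mem hlam
  · -- InjOn
    intro a ha b hb hab
    have hQ : QkL L M k (a - b) = 0 := by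
      rw [map_sub, LinearMap.mem_ker.mp ha, LinearMap.mem_ker.mp hb, sub_self]
    have hlap : lapL (L ^ M) (a - b) = 0 := by
      rw [map_sub]
      simp only at hab
      rw [hab, sub_self]
    exact sub_eq_zero.mp (ker_inter L M k hL3 hk hkM _ hQ hlap)
  · -- SurjOn
    intro s hs
    obtain ⟨mu, hmu, hmueq⟩ := Submodule.mem_map.mp hs
    exact ⟨mu, hmu, hmueq⟩
  · -- finrank
    have hrange : LinearMap.range (QkL L M k) = ⊤ :=
      LinearMap.range_eq_top.mpr (Qk_surj L M k hL3 hk hkM)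
    have hrn := LinearMap.finrank_range_add_finrank_ker (QkL L M k)
    rw [hrange, finrank_top] at hrn
    set D := (lapL (L ^ M)).domRestrict (LinearMap.ker (QkL L M k)) with hD
    have hkerD : LinearMap.ker D = ⊥ := by
      rw [LinearMap.ker_eq_bot']
      intro m hm
      rw [hD, LinearMap.domRestrict_apply] at hm
      have h2 : QkL L M k (m : TPt (L ^ M) → ℝ) = 0 := m.2
      exact Subtype.ext (ker_inter L M k hL3 hk hkM _ h2 hm)
    have hrangeD : LinearMap.range D = Ssub L M k := by
      rw [hD, LinearMap.range_domRestrict]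
      rfl
    have hrn2 := LinearMap.finrank_range_add_finrank_ker D
    rw [hkerD, finrank_bot, add_zero, hrangeD] at hrn2
    rw [← hrn2] at hrn
    exact hrn
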